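/- Let K : ℝ → ℝ be continuously differentiable with K' ∈ L²(ℝ). Let φ and ψ be real random variables with E(φ − ψ)² < ∞, h > 0, and K_h(u) = (1/h)K(u/h). Then ∫_ℝ [E(K_h(x − ψ) − K_h(x − φ))]² dx ≤ (‖K'‖₂²/h³) · E(φ − ψ)². -/

import Mathlib

open MeasureTheory Set
open scoped ENNReal NNReal

private lemma ofReal_sq (r : ℝ) : ENNReal.ofReal (r ^ 2) = (‖r‖₊ : ℝ≥0∞) ^ 2 := by
  rw [← sq_abs, ← Real.norm_eq_abs, ENNReal.ofReal_pow (norm_nonneg r),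
    ofReal_norm]
  rfl

private lemma sq_half (a : ℝ≥0∞) : (a ^ (1/2 : ℝ)) ^ 2 = a := by
  rw [← ENNReal.rpow_natCast (a ^ (1/2:ℝ)) 2, ← ENNReal.rpow_mul]
  norm_num

private lemma lint_cov {g : ℝ → ℝ≥0∞} (hg : Measurable g) {h : ℝ} (hh : 0 < h) (m : ℝ) :
    ∫⁻ x, g ((x - m) / h) = ENNReal.ofReal h * ∫⁻ y, g y := by
  have h0 : h ≠ 0 := hh.ne'
  have step1 : ∫⁻ x, g ((x - m) / h) = ∫⁻ x, g (x / h) :=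
    (measurePreserving_sub_right volume m).lintegral_comp
      (hg.comp (measurable_id.div_const h))
  rw [step1]
  have e : (fun x : ℝ => g (x / h)) = fun x => g (h⁻¹ * x) := by
    funext x; rw [div_eq_inv_mul]
  rw [e]
  calc ∫⁻ x, g (h⁻¹ * x) = ∫⁻ y, g y ∂(Measure.map (h⁻¹ * ·) volume) :=
        (lintegral_map hg (measurable_const_mul _)).symm
    _ = ENNReal.ofReal h * ∫⁻ y, g y := by
        rw [Real.map_volume_mul_left (inv_ne_zero h0), inv_inv,
          lintegral_smul_measure, abs_of_pos hh, smul_eq_mul]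

theorem kernel_bias_bound {Ω : Type*} [MeasurableSpace Ω]
    (μ : Measure Ω) [IsProbabilityMeasure μ] (K : ℝ → ℝ)
    (hK : ContDiff ℝ 1 K) (hK' : MemLp (deriv K) 2 volume)
    (φ ψ : Ω → ℝ) (hφ : Measurable φ) (hψ : Measurable ψ)
    (hL2 : Integrable (fun ω => (φ ω - ψ ω) ^ 2) μ)
    (h : ℝ) (hh : 0 < h) :
    ∫ x, (∫ ω, ((1 / h) * K ((x - ψ ω) / h) - (1 / h) * K ((x - φ ω) / h)) ∂μ) ^ 2 ≤
      ((∫ y, (deriv K y) ^ 2) / h ^ 3) * ∫ ω, (φ ω - ψ ω) ^ 2 ∂μ := by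
  have hK'c : Continuous (deriv K) := hK.continuous_deriv le_rfl
  have hKd : Differentiable ℝ K := hK.differentiable one_ne_zero
  have h0 : h ≠ 0 := hh.ne'
  set c : Ω → ℝ := fun ω => (φ ω - ψ ω) / h ^ 2 with hc
  set m : Ω × ℝ → ℝ := fun p => φ p.1 - p.2 * (φ p.1 - ψ p.1) with hm
  set ρ : Measure ℝ := volume.restrict (Ioc (0:ℝ) 1) with hρ
  haveI hρprob : IsProbabilityMeasure ρ := ⟨by simp [hρ, Real.volume_Ioc]⟩
  set ν : Measure (Ω × ℝ) := μ.prod ρ with hν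
  -- measurability
  have hmm : Measurable m := (hφ.comp measurable_fst).sub
    (measurable_snd.mul ((hφ.comp measurable_fst).sub (hψ.comp measurable_fst)))
  have hH : Measurable (fun q : ℝ × (Ω × ℝ) => (‖deriv K ((q.1 - m q.2) / h)‖₊ : ℝ≥0∞) ^ 2) := by
    apply Measurable.pow_const
    exact (hK'c.measurable.comp
      ((measurable_fst.sub (hmm.comp measurable_snd)).div_const h)).nnnorm.coe_nnreal_ennreal
  -- key pointwise identity
  have key : ∀ x ω, (1 / h) * K ((x - ψ ω) / h) - (1 / h) * K ((x - φ ω) / h)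
      = c ω * ∫ s in Ioc (0:ℝ) 1, deriv K ((x - m (ω, s)) / h) := by
    intro x ω
    have hioc : (∫ s in Ioc (0:ℝ) 1, deriv K ((x - m (ω, s)) / h))
        = ∫ s in (0:ℝ)..1, deriv K ((x - m (ω, s)) / h) := by
      rw [intervalIntegral.integral_of_le zero_le_one]
    by_cases hab0 : φ ω = ψ ω
    · simp [hc, hab0]
    · set a := (x - φ ω) / h with ha
      set b := (x - ψ ω) / h with hb
      have hab : b - a = (φ ω - ψ ω) / h := by rw [ha, hb]; field_simp; ring
      have hba : b - a ≠ 0 := by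
        rw [hab]; exact div_ne_zero (sub_ne_zero.2 hab0) h0
      have harg : ∀ s : ℝ, (x - m (ω, s)) / h = (b - a) * s + a := by
        intro s
        simp only [hm]
        rw [hab, ha]
        field_simp
        ring
      have hftc : (∫ t in a..b, deriv K t) = K b - K a :=
        intervalIntegral.integral_deriv_eq_sub (fun t _ => hKd t)
          (hK'c.intervalIntegrable a b)
      have hcv : (∫ s in (0:ℝ)..1, deriv K ((b - a) * s + a))
          = (b - a)⁻¹ * ∫ t in a..b, deriv K t := by
        rw [intervalIntegral.integral_comp_mul_add (deriv K) hba a]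
        norm_num
      have hne : φ ω - ψ ω ≠ 0 := sub_ne_zero.2 hab0
      have hcoef : c ω * (b - a)⁻¹ = 1 / h := by
        simp only [hc, hab]
        field_simp
      rw [hioc]
      simp_rw [harg]
      rw [hcv, ← mul_assoc, hcoef, hftc]
      ring
  -- ennreal quantities
  set J : ℝ≥0∞ := ∫⁻ y, (‖deriv K y‖₊ : ℝ≥0∞) ^ 2 with hJ
  set Ec : ℝ≥0∞ := ∫⁻ ω, (‖c ω‖₊ : ℝ≥0∞) ^ 2 ∂μ with hEc
  set G : ℝ → ℝ≥0∞ := fun x => ∫⁻ p, (‖deriv K ((x - m p) / h)‖₊ : ℝ≥0∞) ^ 2 ∂ν with hG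
  have hGmeas : Measurable G := hH.lintegral_prod_right'
  have hcm : Measurable c := (hφ.sub hψ).div_const _
  have hcsq_int : Integrable (fun ω => c ω ^ 2) μ := by
    have : (fun ω => c ω ^ 2) = fun ω => (φ ω - ψ ω) ^ 2 / (h ^ 2) ^ 2 := by
      funext ω; rw [hc]; rw [div_pow]
    rw [this]
    exact hL2.div_const _
  have hEc_eq : Ec = ENNReal.ofReal (∫ ω, c ω ^ 2 ∂μ) := by
    rw [hEc, ofReal_integral_eq_lintegral_ofReal hcsq_int
      (Filter.Eventually.of_forall fun ω => sq_nonneg _)]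
    exact (lintegral_congr fun ω => (ofReal_sq (c ω))).symm
  have hEc_ne : Ec ≠ ∞ := by rw [hEc_eq]; exact ENNReal.ofReal_ne_top
  have hJ_eq : J = ENNReal.ofReal (∫ y, (deriv K y) ^ 2) := by
    rw [hJ, ofReal_integral_eq_lintegral_ofReal hK'.integrable_sq
      (Filter.Eventually.of_forall fun y => sq_nonneg _)]
    exact (lintegral_congr fun y => (ofReal_sq (deriv K y))).symm
  have hJ_ne : J ≠ ∞ := by rw [hJ_eq]; exact ENNReal.ofReal_ne_top
  -- total x-integral of G
  have hGlint : ∫⁻ x, G x = ENNReal.ofReal h * J := by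
    rw [hG]
    rw [lintegral_lintegral_swap hH.aemeasurable]
    have inner : ∀ p : Ω × ℝ, (∫⁻ x, (‖deriv K ((x - m p) / h)‖₊ : ℝ≥0∞) ^ 2)
        = ENNReal.ofReal h * J := by
      intro p
      exact lint_cov (hK'c.measurable.nnnorm.coe_nnreal_ennreal.pow_const 2) hh (m p)
    rw [lintegral_congr inner]
    simp [measure_univ]
  have hGlint_ne : (∫⁻ x, G x) ≠ ∞ :=
    hGlint ▸ ENNReal.mul_ne_top ENNReal.ofReal_ne_top hJ_ne
  have hGae : ∀ᵐ x, G x < ∞ := ae_lt_top hGmeas hGlint_ne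
  -- pointwise claim
  have claim : ∀ x,
      ((‖∫ ω, ((1 / h) * K ((x - ψ ω) / h) - (1 / h) * K ((x - φ ω) / h)) ∂μ‖₊ : ℝ≥0∞)) ^ 2
        ≤ Ec * G x := by
    intro x
    set f1 : Ω × ℝ → ℝ≥0∞ := fun p => (‖c p.1‖₊ : ℝ≥0∞) with hf1
    set f2 : Ω × ℝ → ℝ≥0∞ := fun p => (‖deriv K ((x - m p) / h)‖₊ : ℝ≥0∞) with hf2
    have hf1m : Measurable f1 := (hcm.comp measurable_fst).nnnorm.coe_nnreal_ennreal
    have hf2m : Measurable f2 := (hK'c.measurable.comp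
      ((measurable_const.sub hmm).div_const h)).nnnorm.coe_nnreal_ennreal
    have step1 : (‖∫ ω, ((1 / h) * K ((x - ψ ω) / h) - (1 / h) * K ((x - φ ω) / h)) ∂μ‖₊ : ℝ≥0∞)
        ≤ ∫⁻ p, (f1 * f2) p ∂ν := by
      refine le_trans (enorm_integral_le_lintegral_enorm _) ?_
      have pt : ∀ ω, (‖(1 / h) * K ((x - ψ ω) / h) - (1 / h) * K ((x - φ ω) / h)‖₊ : ℝ≥0∞)
          ≤ ∫⁻ s, (‖c ω‖₊ : ℝ≥0∞) * (‖deriv K ((x - m (ω, s)) / h)‖₊ : ℝ≥0∞) ∂ρ := by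
        intro ω
        rw [key x ω]
        calc (‖c ω * ∫ s in Ioc (0:ℝ) 1, deriv K ((x - m (ω, s)) / h)‖₊ : ℝ≥0∞)
            = (‖c ω‖₊ : ℝ≥0∞) * (‖∫ s, deriv K ((x - m (ω, s)) / h) ∂ρ‖₊ : ℝ≥0∞) := by
              rw [nnnorm_mul]; push_cast; rfl
          _ ≤ (‖c ω‖₊ : ℝ≥0∞) * ∫⁻ s, (‖deriv K ((x - m (ω, s)) / h)‖₊ : ℝ≥0∞) ∂ρ :=
              mul_le_mul_right (enorm_integral_le_lintegral_enorm _) _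
          _ = ∫⁻ s, (‖c ω‖₊ : ℝ≥0∞) * (‖deriv K ((x - m (ω, s)) / h)‖₊ : ℝ≥0∞) ∂ρ :=
              (lintegral_const_mul _ ((hK'c.measurable.comp
                ((measurable_const.sub (hmm.comp measurable_prodMk_left)).div_const h)
                ).nnnorm.coe_nnreal_ennreal)).symm
      refine le_trans (lintegral_mono pt) (le_of_eq ?_)
      rw [hν]
      exact (lintegral_prod (f1 * f2) ((hf1m.mul hf2m).aemeasurable)).symm
    have holder : (∫⁻ p, (f1 * f2) p ∂ν)
        ≤ (∫⁻ p, f1 p ^ (2:ℝ) ∂ν) ^ (1/(2:ℝ)) * (∫⁻ p, f2 p ^ (2:ℝ) ∂ν) ^ (1/(2:ℝ)) :=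
      ENNReal.lintegral_mul_le_Lp_mul_Lq ν ⟨by norm_num, by norm_num, by norm_num⟩
        hf1m.aemeasurable hf2m.aemeasurable
    have e1 : (∫⁻ p, f1 p ^ (2:ℝ) ∂ν) = Ec := by
      have : ∀ p : Ω × ℝ, f1 p ^ (2:ℝ) = (‖c p.1‖₊ : ℝ≥0∞) ^ 2 := by
        intro p
        rw [hf1, ← ENNReal.rpow_natCast]
        norm_num
      rw [lintegral_congr this, hν,
        lintegral_prod _ ((hf1m.pow_const 2).aemeasurable)]
      simp [hf1, lintegral_const, measure_univ, hEc]
    have e2 : (∫⁻ p, f2 p ^ (2:ℝ) ∂ν) = G x := by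
      have : ∀ p : Ω × ℝ, f2 p ^ (2:ℝ) = (‖deriv K ((x - m p) / h)‖₊ : ℝ≥0∞) ^ 2 := by
        intro p
        rw [hf2, ← ENNReal.rpow_natCast]
        norm_num
      exact lintegral_congr this
    calc ((‖∫ ω, ((1 / h) * K ((x - ψ ω) / h) - (1 / h) * K ((x - φ ω) / h)) ∂μ‖₊ : ℝ≥0∞)) ^ 2
        ≤ (∫⁻ p, (f1 * f2) p ∂ν) ^ 2 := pow_le_pow_left₀ zero_le step1 2
      _ ≤ ((∫⁻ p, f1 p ^ (2:ℝ) ∂ν) ^ (1/(2:ℝ)) * (∫⁻ p, f2 p ^ (2:ℝ) ∂ν) ^ (1/(2:ℝ))) ^ 2 :=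
          pow_le_pow_left₀ zero_le holder 2
      _ = Ec * G x := by
          rw [mul_pow, sq_half, sq_half, e1, e2]
  -- a.e. pointwise bound on the real integrand
  have hbound : ∀ᵐ x, (∫ ω, ((1 / h) * K ((x - ψ ω) / h) - (1 / h) * K ((x - φ ω) / h)) ∂μ) ^ 2
      ≤ (Ec * G x).toReal := by
    filter_upwards [hGae] with x hx
    have h1 : ∀ r : ℝ, ((‖r‖₊ : ℝ≥0∞) ^ 2).toReal = r ^ 2 := by
      intro r
      rw [ENNReal.toReal_pow]
      simp [Real.norm_eq_abs, sq_abs]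
    calc (∫ ω, ((1 / h) * K ((x - ψ ω) / h) - (1 / h) * K ((x - φ ω) / h)) ∂μ) ^ 2
        = ((‖∫ ω, ((1 / h) * K ((x - ψ ω) / h) - (1 / h) * K ((x - φ ω) / h)) ∂μ‖₊ : ℝ≥0∞) ^ 2).toReal :=
          (h1 _).symm
      _ ≤ (Ec * G x).toReal :=
          ENNReal.toReal_mono (ENNReal.mul_ne_top hEc_ne hx.ne) (claim x)
  -- majorant integrability
  have hmaj_meas : Measurable (fun x => Ec * G x) := hGmeas.const_mul Ec
  have hmaj_lint : (∫⁻ x, Ec * G x) ≠ ∞ := by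
    rw [lintegral_const_mul Ec hGmeas, hGlint]
    exact ENNReal.mul_ne_top hEc_ne (ENNReal.mul_ne_top ENNReal.ofReal_ne_top hJ_ne)
  have hmaj : Integrable (fun x => (Ec * G x).toReal) volume :=
    integrable_toReal_of_lintegral_ne_top hmaj_meas.aemeasurable hmaj_lint
  -- assemble
  have main : ∫ x, (∫ ω, ((1 / h) * K ((x - ψ ω) / h) - (1 / h) * K ((x - φ ω) / h)) ∂μ) ^ 2
      ≤ (Ec * (ENNReal.ofReal h * J)).toReal := by
    calc ∫ x, (∫ ω, ((1 / h) * K ((x - ψ ω) / h) - (1 / h) * K ((x - φ ω) / h)) ∂μ) ^ 2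
        ≤ ∫ x, (Ec * G x).toReal :=
          integral_mono_of_nonneg (Filter.Eventually.of_forall fun x => sq_nonneg _) hmaj hbound
      _ = (∫⁻ x, Ec * G x).toReal :=
          integral_toReal hmaj_meas.aemeasurable (ae_lt_top hmaj_meas hmaj_lint)
      _ = (Ec * (ENNReal.ofReal h * J)).toReal := by
          rw [lintegral_const_mul Ec hGmeas, hGlint]
  refine le_trans main (le_of_eq ?_)
  have hA : (0:ℝ) ≤ ∫ ω, c ω ^ 2 ∂μ := integral_nonneg fun ω => sq_nonneg _
  have hB : (0:ℝ) ≤ ∫ y, (deriv K y) ^ 2 := integral_nonneg fun y => sq_nonneg _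
  rw [hEc_eq, hJ_eq, ENNReal.toReal_mul, ENNReal.toReal_mul, ENNReal.toReal_ofReal hA,
    ENNReal.toReal_ofReal hh.le, ENNReal.toReal_ofReal hB]
  have hcint : (∫ ω, c ω ^ 2 ∂μ) = (∫ ω, (φ ω - ψ ω) ^ 2 ∂μ) / h ^ 4 := by
    have e : (fun ω => c ω ^ 2) = fun ω => (φ ω - ψ ω) ^ 2 / h ^ 4 := by
      funext ω
      rw [hc, div_pow]
      ring_nf
    rw [e, integral_div]
  rw [hcint]
  field_simp
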